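/- arXiv:1707.05282 — 2 statements merged into one kernel-verified Lean document; each statement's English description precedes it below -/
import Mathlib

section
/- If W is a (k+1)-level coherence witness (i.e., ⟨φ|W|φ⟩ ≥ 0 for all pure states φ with coherence rank ≤ k), then its smallest eigenvalue satisfies λ_min(W) ≥ −((d−k)/k) λ_max(W). -/
open Matrix BigOperators ComplexOrder
noncomputable section
set_option maxHeartbeats 1000000

lemma count_single {d k : ℕ} (hk : 1 ≤ k) (i : Fin d) :
    ((Finset.powersetCard k (Finset.univ : Finset (Fin d))).filter (fun S => i ∈ S)).card
      = (d-1).choose (k-1) := by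
  have : ((Finset.powersetCard k (Finset.univ : Finset (Fin d))).filter (fun S => i ∈ S)).card
      = (Finset.powersetCard (k-1) (Finset.univ.erase i)).card := by
    refine Finset.card_bij' (fun S _ => S.erase i) (fun T _ => insert i T) ?hi ?hj ?li ?ri
    case hi =>
      intro S hS
      simp only [Finset.mem_filter, Finset.mem_powersetCard_univ] at hS
      rw [Finset.mem_powersetCard]
      exact ⟨Finset.erase_subset_erase i (Finset.subset_univ S),
        by rw [Finset.card_erase_of_mem hS.2, hS.1]⟩
    case hj =>
      intro T hT
      rw [Finset.mem_powersetCard] at hT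
      have hiT : i ∉ T := fun h => (Finset.mem_erase.1 (hT.1 h)).1 rfl
      simp only [Finset.mem_filter, Finset.mem_powersetCard_univ]
      constructor
      · rw [Finset.card_insert_of_notMem hiT, hT.2]
        omega
      · exact Finset.mem_insert_self i T
    case li =>
      intro S hS
      simp only [Finset.mem_filter] at hS
      exact Finset.insert_erase hS.2
    case ri =>
      intro T hT
      rw [Finset.mem_powersetCard] at hT
      exact Finset.erase_insert (fun h => (Finset.mem_erase.1 (hT.1 h)).1 rfl)
  rw [this, Finset.card_powersetCard, Finset.card_erase_of_mem (Finset.mem_univ i),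
    Finset.card_univ, Fintype.card_fin]

lemma count_pair {d k : ℕ} (hk : 2 ≤ k) (i j : Fin d) (hij : i ≠ j) :
    ((Finset.powersetCard k (Finset.univ : Finset (Fin d))).filter
      (fun S => i ∈ S ∧ j ∈ S)).card = (d-2).choose (k-2) := by
  have : ((Finset.powersetCard k (Finset.univ : Finset (Fin d))).filter
      (fun S => i ∈ S ∧ j ∈ S)).card
      = (Finset.powersetCard (k-2) ((Finset.univ.erase i).erase j)).card := by
    refine Finset.card_bij' (fun S _ => (S.erase i).erase j)
      (fun T _ => insert i (insert j T)) ?hi ?hj ?li ?ri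
    case hi =>
      intro S hS
      simp only [Finset.mem_filter, Finset.mem_powersetCard_univ] at hS
      rw [Finset.mem_powersetCard]
      refine ⟨?_, ?_⟩
      · intro a ha
        have h1 := Finset.mem_erase.1 ha
        have h2 := Finset.mem_erase.1 h1.2
        exact Finset.mem_erase.2 ⟨h1.1, Finset.mem_erase.2 ⟨h2.1, Finset.mem_univ a⟩⟩
      · rw [Finset.card_erase_of_mem (Finset.mem_erase.2 ⟨Ne.symm hij, hS.2.2⟩),
          Finset.card_erase_of_mem hS.2.1, hS.1]
        omega
    case hj =>
      intro T hT
      rw [Finset.mem_powersetCard] at hT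
      have hiT : i ∉ T := fun h => by
        have := Finset.mem_erase.1 (hT.1 h)
        exact (Finset.mem_erase.1 this.2).1 rfl
      have hjT : j ∉ T := fun h => (Finset.mem_erase.1 (hT.1 h)).1 rfl
      have hi' : i ∉ insert j T := by
        simp only [Finset.mem_insert]
        rintro (h | h)
        · exact hij h
        · exact hiT h
      simp only [Finset.mem_filter, Finset.mem_powersetCard_univ]
      refine ⟨?_, Finset.mem_insert_self i _, Finset.mem_insert_of_mem (Finset.mem_insert_self j T)⟩
      rw [Finset.card_insert_of_notMem hi', Finset.card_insert_of_notMem hjT, hT.2]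
      omega
    case li =>
      intro S hS
      simp only [Finset.mem_filter] at hS
      rw [Finset.insert_erase (Finset.mem_erase.2 ⟨Ne.symm hij, hS.2.2⟩), Finset.insert_erase hS.2.1]
    case ri =>
      intro T hT
      rw [Finset.mem_powersetCard] at hT
      have hiT : i ∉ T := fun h => by
        have := Finset.mem_erase.1 (hT.1 h)
        exact (Finset.mem_erase.1 this.2).1 rfl
      have hjT : j ∉ T := fun h => (Finset.mem_erase.1 (hT.1 h)).1 rfl
      have hi' : i ∉ insert j T := by
        simp only [Finset.mem_insert]
        rintro (h | h)
        · exact hij h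
        · exact hiT h
      rw [Finset.erase_insert hi', Finset.erase_insert hjT]
  rw [this, Finset.card_powersetCard]
  congr 1
  rw [Finset.card_erase_of_mem (Finset.mem_erase.2 ⟨Ne.symm hij, Finset.mem_univ j⟩),
    Finset.card_erase_of_mem (Finset.mem_univ i), Finset.card_univ, Fintype.card_fin]
  omega

lemma count_pair_one {d : ℕ} (i j : Fin d) (hij : i ≠ j) :
    ((Finset.powersetCard 1 (Finset.univ : Finset (Fin d))).filter
      (fun S => i ∈ S ∧ j ∈ S)).card = 0 := by
  rw [Finset.card_eq_zero, Finset.filter_eq_empty_iff]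
  intro S hS
  rw [Finset.mem_powersetCard_univ] at hS
  obtain ⟨a, rfl⟩ := Finset.card_eq_one.1 hS
  simp only [Finset.mem_singleton]
  rintro ⟨rfl, rfl⟩
  exact hij rfl

variable {d : ℕ} (W : Matrix (Fin d) (Fin d) ℂ)

lemma quad_expand (y : Fin d → ℂ) :
    star y ⬝ᵥ W *ᵥ y = ∑ i, ∑ j, (starRingEnd ℂ) (y i) * W i j * y j := by
  simp only [dotProduct, Matrix.mulVec, Pi.star_apply, RCLike.star_def,
    Finset.mul_sum, mul_assoc]

lemma quad_smul (c : ℝ) (y : Fin d → ℂ) :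
    star ((c:ℂ) • y) ⬝ᵥ W *ᵥ ((c:ℂ) • y) = ((c^2 : ℝ):ℂ) * (star y ⬝ᵥ W *ᵥ y) := by
  rw [mulVec_smul, dotProduct_smul, star_smul, smul_dotProduct]
  simp only [smul_eq_mul, star_trivial, RCLike.star_def, Complex.conj_ofReal]
  push_cast
  ring

lemma quad_restrict (x : Fin d → ℂ) (S : Finset (Fin d)) :
    star (fun i => if i ∈ S then x i else 0) ⬝ᵥ W *ᵥ (fun i => if i ∈ S then x i else 0)
      = ∑ i, ∑ j, if i ∈ S ∧ j ∈ S then (starRingEnd ℂ) (x i) * W i j * x j else 0 := by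
  rw [quad_expand]
  refine Finset.sum_congr rfl fun i _ => Finset.sum_congr rfl fun j _ => ?_
  by_cases hi : i ∈ S <;> by_cases hj : j ∈ S <;> simp [hi, hj]

lemma quad_vij (x : Fin d → ℂ) (i j : Fin d) :
    star (fun l => (if l = i then x i else 0) - (if l = j then x j else 0)) ⬝ᵥ
      W *ᵥ (fun l => (if l = i then x i else 0) - (if l = j then x j else 0))
    = ((starRingEnd ℂ) (x i) * W i i * x i + (starRingEnd ℂ) (x j) * W j j * x j)
      - ((starRingEnd ℂ) (x i) * W i j * x j + (starRingEnd ℂ) (x j) * W j i * x i) := by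
  rw [quad_expand]
  have hterm : ∀ l m : Fin d,
      (starRingEnd ℂ) ((if l = i then x i else 0) - (if l = j then x j else 0)) * W l m *
        ((if m = i then x i else 0) - (if m = j then x j else 0))
      = ((if l = i then (starRingEnd ℂ) (x i) else 0) - (if l = j then (starRingEnd ℂ) (x j) else 0))
          * W l m * ((if m = i then x i else 0) - (if m = j then x j else 0)) := by
    intro l m
    congr 1
    congr 1
    rw [map_sub]
    congr 1 <;> split <;> simp
  simp only [hterm]
  simp only [sub_mul, mul_sub, ite_mul, zero_mul, mul_ite, mul_zero,
    Finset.sum_sub_distrib, Finset.sum_ite_eq', Finset.mem_univ, if_true]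
  ring

lemma normsq_vij (x : Fin d → ℂ) (i j : Fin d) :
    ∑ l, ‖(if l = i then x i else 0) - (if l = j then x j else 0)‖^2
      = (if i = j then 0 else ‖x i‖^2 + ‖x j‖^2) := by
  by_cases hij : i = j
  · subst hij
    simp
  · rw [if_neg hij]
    have : ∀ l, ‖(if l = i then x i else 0) - (if l = j then x j else 0)‖^2
        = (if l = i then ‖x i‖^2 else 0) + (if l = j then ‖x j‖^2 else 0) := by
      intro l
      by_cases hli : l = i <;> by_cases hlj : l = j
      · exact absurd (hli.symm.trans hlj) hij
      · subst hli; simp [hij]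
      · subst hlj
        simp [hli]
      · simp [hli, hlj]
    simp only [this, Finset.sum_add_distrib, Finset.sum_ite_eq', Finset.mem_univ, if_true]

lemma sum_over_subsets (x : Fin d → ℂ) (k : ℕ) :
    ∑ S ∈ Finset.powersetCard k (Finset.univ : Finset (Fin d)),
      (∑ i, ∑ j, if i ∈ S ∧ j ∈ S then (starRingEnd ℂ) (x i) * W i j * x j else 0)
    = ∑ i, ∑ j, (((Finset.powersetCard k (Finset.univ : Finset (Fin d))).filter
        (fun S => i ∈ S ∧ j ∈ S)).card : ℂ) * ((starRingEnd ℂ) (x i) * W i j * x j) := by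
  rw [Finset.sum_comm]
  refine Finset.sum_congr rfl fun i _ => ?_
  rw [Finset.sum_comm]
  refine Finset.sum_congr rfl fun j _ => ?_
  rw [← Finset.sum_filter, Finset.sum_const, nsmul_eq_mul]

lemma split_diag (a b : ℂ) (g : Fin d → Fin d → ℂ) :
    ∑ i, ∑ j, (if i = j then a else b) * g i j
      = b * (∑ i, ∑ j, g i j) + (a - b) * ∑ i, g i i := by
  have key : ∀ i j : Fin d, (if i = j then a else b) * g i j
      = b * g i j + (if i = j then (a-b) * g i j else 0) := by
    intro i j; split <;> ring
  simp only [key, Finset.sum_add_distrib, Finset.sum_ite_eq, Finset.mem_univ, if_true]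
  simp [Finset.mul_sum]

lemma quad_decomp (hW : W.IsHermitian) (y : EuclideanSpace ℂ (Fin d)) :
    star (y : Fin d → ℂ) ⬝ᵥ W *ᵥ (y : Fin d → ℂ) =
      ∑ i, (hW.eigenvalues i : ℂ) * ((‖hW.eigenvectorBasis.repr y i‖ : ℝ)^2 : ℂ) := by
  set b := hW.eigenvectorBasis with hb
  have key : ∀ i, b.repr (WithLp.toLp 2 (W *ᵥ (y : Fin d → ℂ))) i
      = (hW.eigenvalues i : ℂ) * b.repr y i := by
    intro i
    rw [b.repr_apply_apply, b.repr_apply_apply]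
    rw [EuclideanSpace.inner_eq_star_dotProduct, EuclideanSpace.inner_eq_star_dotProduct,
      dotProduct_comm _ (star _), dotProduct_comm _ (star _)]
    show star (b i : Fin d → ℂ) ⬝ᵥ W *ᵥ (y : Fin d → ℂ)
      = (hW.eigenvalues i : ℂ) * (star (b i : Fin d → ℂ) ⬝ᵥ (y : Fin d → ℂ))
    rw [dotProduct_mulVec]
    have h0 : star (b i : Fin d → ℂ) ᵥ* W = star (W *ᵥ (b i : Fin d → ℂ)) := by
      rw [star_mulVec, hW.eq]
    have h2 : W *ᵥ (b i : Fin d → ℂ) = hW.eigenvalues i • (b i : Fin d → ℂ) :=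
      hW.mulVec_eigenvectorBasis i
    rw [h0, h2, star_smul, smul_dotProduct]
    simp [Complex.real_smul]
  have h1 : star (y : Fin d → ℂ) ⬝ᵥ W *ᵥ (y : Fin d → ℂ)
      = inner (𝕜 := ℂ) y (WithLp.toLp 2 (W *ᵥ (y : Fin d → ℂ))) := by
    rw [EuclideanSpace.inner_eq_star_dotProduct, dotProduct_comm]
  rw [h1, ← b.repr.inner_map_map y]
  rw [PiLp.inner_apply]
  refine Finset.sum_congr rfl fun i _ => ?_
  rw [RCLike.inner_apply, key i]
  have : (starRingEnd ℂ) (b.repr y i) * ((hW.eigenvalues i : ℂ) * b.repr y i)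
      = (hW.eigenvalues i : ℂ) * ((starRingEnd ℂ) (b.repr y i) * b.repr y i) := by ring
  rw [mul_assoc, RCLike.mul_conj]
  norm_num

lemma normsq_decomp (hW : W.IsHermitian) (y : EuclideanSpace ℂ (Fin d)) :
    ∑ i, ‖hW.eigenvectorBasis.repr y i‖^2 = ∑ i, ‖(y : Fin d → ℂ) i‖^2 := by
  have h := hW.eigenvectorBasis.repr.inner_map_map y y
  rw [PiLp.inner_apply, PiLp.inner_apply] at h
  simp only [RCLike.inner_apply, RCLike.conj_mul] at h
  have h2 : ((∑ i, ‖hW.eigenvectorBasis.repr y i‖^2 : ℝ) : ℂ)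
      = ((∑ i, ‖(y : Fin d → ℂ) i‖^2 : ℝ) : ℂ) := by
    push_cast
    simp only [RCLike.mul_conj] at h
    exact h
  exact_mod_cast h2

lemma rayleigh_upper [Nonempty (Fin d)] (hW : W.IsHermitian) (y : Fin d → ℂ) :
    (star y ⬝ᵥ W *ᵥ y).re ≤ (⨆ i, hW.eigenvalues i) * ∑ i, ‖y i‖^2 := by
  have h := quad_decomp W hW (WithLp.toLp 2 y)
  simp only [WithLp.ofLp_toLp] at h
  have hre : (star y ⬝ᵥ W *ᵥ y).re
      = ∑ i, hW.eigenvalues i * ‖hW.eigenvectorBasis.repr (WithLp.toLp 2 y) i‖^2 := by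
    rw [h, Complex.re_sum]
    refine Finset.sum_congr rfl fun i _ => ?_
    rw [← Complex.ofReal_pow, ← Complex.ofReal_mul, Complex.ofReal_re]
  have hn := normsq_decomp W hW (WithLp.toLp 2 y)
  simp only [WithLp.ofLp_toLp] at hn
  rw [hre, ← hn, Finset.mul_sum]
  refine Finset.sum_le_sum fun i _ => ?_
  exact mul_le_mul_of_nonneg_right
    (le_ciSup (Set.Finite.bddAbove (Set.finite_range _)) i) (sq_nonneg _)

/-- coherence rank of a vector: number of nonzero coefficients in the fixed basis -/
def cohRank {d : ℕ} (v : Fin d → ℂ) : ℕ :=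
  (Finset.univ.filter (fun i => v i ≠ 0)).card

/-- If `⟨φ|W|φ⟩ ≥ 0` for all pure states `φ` with coherence rank at most `k`, then the
smallest eigenvalue of `W` satisfies `λ_min(W) ≥ -((d-k)/k) λ_max(W)`. -/
theorem stmt_13 {d k : ℕ} (hk : 1 ≤ k) (hkd : k ≤ d)
    (W : Matrix (Fin d) (Fin d) ℂ) (hW : W.IsHermitian)
    (hwit : ∀ φ : Fin d → ℂ, (∑ i, ‖φ i‖ ^ 2 = 1) → cohRank φ ≤ k →
      0 ≤ dotProduct (star φ) (W.mulVec φ)) :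
    (⨅ i, hW.eigenvalues i) ≥ -(((d : ℝ) - k) / k) * ⨆ i, hW.eigenvalues i := by
  have hd : 0 < d := lt_of_lt_of_le hk hkd
  haveI : Nonempty (Fin d) := Fin.pos_iff_nonempty.1 hd
  set M := ⨆ i, hW.eigenvalues i with hM
  -- unnormalized witness property
  have hwit' : ∀ y : Fin d → ℂ, cohRank y ≤ k → 0 ≤ (star y ⬝ᵥ W *ᵥ y).re := by
    intro y hy
    by_cases h0 : ∑ i, ‖y i‖^2 = 0
    · have hy0 : y = 0 := by
        funext i
        have h1 : ‖y i‖^2 ≤ 0 := h0 ▸ Finset.single_le_sum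
          (fun j (_ : j ∈ Finset.univ) => sq_nonneg ‖y j‖) (Finset.mem_univ i)
        have h2 : ‖y i‖ = 0 := by nlinarith [sq_nonneg ‖y i‖, norm_nonneg (y i)]
        simpa using h2
      rw [hy0]
      simp
    · have hpos : 0 < ∑ i, ‖y i‖^2 :=
        lt_of_le_of_ne (Finset.sum_nonneg fun i _ => sq_nonneg _) (Ne.symm h0)
      set c : ℝ := (Real.sqrt (∑ i, ‖y i‖^2))⁻¹ with hc
      have hcpos : 0 < c := by
        rw [hc]
        exact inv_pos.2 (Real.sqrt_pos.2 hpos)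
      have hc2 : c^2 * (∑ i, ‖y i‖^2) = 1 := by
        rw [hc, inv_pow, Real.sq_sqrt hpos.le]
        field_simp
      have hφsum : ∑ i, ‖((c:ℂ) • y) i‖^2 = 1 := by
        have : ∀ i, ‖((c:ℂ) • y) i‖^2 = c^2 * ‖y i‖^2 := by
          intro i
          simp [Pi.smul_apply, norm_smul, mul_pow, abs_of_pos hcpos]
        rw [Finset.sum_congr rfl (fun i _ => this i), ← Finset.mul_sum, hc2]
      have hcr : cohRank ((c:ℂ) • y) ≤ k := by
        have : cohRank ((c:ℂ) • y) = cohRank y := by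
          unfold cohRank
          congr 1
          apply Finset.filter_congr
          intro i _
          simp only [Pi.smul_apply, smul_eq_mul, ne_eq, mul_eq_zero, not_or]
          constructor
          · rintro ⟨_, h⟩; exact h
          · intro h
            exact ⟨by exact_mod_cast hcpos.ne', h⟩
        omega
      have hw := hwit ((c:ℂ) • y) hφsum hcr
      have hre : 0 ≤ (star ((c:ℂ) • y) ⬝ᵥ W *ᵥ ((c:ℂ) • y)).re := by
        rw [Complex.le_def] at hw
        simpa using hw.1
      rw [quad_smul, Complex.re_ofReal_mul] at hre
      nlinarith [sq_nonneg c]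
  -- minimizing eigenvalue and its eigenvector
  obtain ⟨i0, hi0⟩ := Finite.exists_min hW.eigenvalues
  set m := hW.eigenvalues i0 with hm
  have hinf : (⨅ i, hW.eigenvalues i) = m :=
    le_antisymm (ciInf_le (Set.Finite.bddBelow (Set.finite_range _)) i0) (le_ciInf hi0)
  set x : Fin d → ℂ := (hW.eigenvectorBasis i0 : Fin d → ℂ) with hx
  have hxsum : ∑ i, ‖x i‖^2 = 1 := by
    have h := normsq_decomp W hW (hW.eigenvectorBasis i0)
    rw [OrthonormalBasis.repr_self] at h
    have h2 : ∑ i, ‖EuclideanSpace.single i0 (1:ℂ) i‖^2 = 1 := by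
      have : ∀ i, ‖EuclideanSpace.single i0 (1:ℂ) i‖^2 = if i = i0 then 1 else 0 := by
        intro i
        rw [EuclideanSpace.single_apply]
        split <;> simp
      rw [Finset.sum_congr rfl (fun i _ => this i), Finset.sum_ite_eq']
      simp
    rw [← h2, ← h]
  have hxx : star x ⬝ᵥ x = (1:ℂ) := by
    have e : star x ⬝ᵥ x = ∑ i, ((‖x i‖:ℂ))^2 :=
      Finset.sum_congr rfl (fun i _ => RCLike.conj_mul (x i))
    rw [e]
    have : ∑ i, ((‖x i‖:ℂ))^2 = ((∑ i, ‖x i‖^2 : ℝ) : ℂ) := by push_cast; rfl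
    rw [this, hxsum, Complex.ofReal_one]
  have hqx : star x ⬝ᵥ W *ᵥ x = ((m:ℝ):ℂ) := by
    have hWx : W *ᵥ x = m • x := hW.mulVec_eigenvectorBasis i0
    rw [hWx, dotProduct_smul, hxx]
    simp [Complex.real_smul]
  have hqxre : (star x ⬝ᵥ W *ᵥ x).re = m := by rw [hqx, Complex.ofReal_re]
  set D : ℝ := ∑ i, ‖x i‖^2 * (W i i).re with hDdef
  have hgdiag : ∀ i : Fin d, ((starRingEnd ℂ) (x i) * W i i * x i).re = ‖x i‖^2 * (W i i).re := by
    intro i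
    have e0 : (starRingEnd ℂ) (x i) * W i i * x i = ((starRingEnd ℂ) (x i) * x i) * W i i := by
      ring
    have e1 : (starRingEnd ℂ) (x i) * x i = ((‖x i‖^2 : ℝ) : ℂ) := by
      rw [mul_comm, Complex.mul_conj, Complex.normSq_eq_norm_sq]
    rw [e0, e1, Complex.re_ofReal_mul]
  have hDre : (∑ i, (starRingEnd ℂ) (x i) * W i i * x i).re = D := by
    rw [Complex.re_sum]
    exact Finset.sum_congr rfl fun i _ => hgdiag i
  -- second inequality : d * D - m ≤ (d-1) * M
  have h2 : (d:ℝ) * D - m ≤ ((d:ℝ) - 1) * M := by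
    set v : Fin d → Fin d → Fin d → ℂ :=
      fun i j l => (if l = i then x i else 0) - (if l = j then x j else 0) with hv
    have hray : ∀ i j : Fin d, (star (v i j) ⬝ᵥ W *ᵥ v i j).re ≤ M * ∑ l, ‖v i j l‖^2 :=
      fun i j => rayleigh_upper W hW (v i j)
    have hsum : ∑ i, ∑ j, (star (v i j) ⬝ᵥ W *ᵥ v i j).re
        ≤ ∑ i, ∑ j, M * ∑ l, ‖v i j l‖^2 :=
      Finset.sum_le_sum fun i _ => Finset.sum_le_sum fun j _ => hray i j
    have hgsum : ∑ i, ∑ j, ((starRingEnd ℂ) (x i) * W i j * x j).re = m := by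
      have : (∑ i, ∑ j, (starRingEnd ℂ) (x i) * W i j * x j).re = m := by
        rw [← quad_expand, hqxre]
      rw [← this, Complex.re_sum]
      exact Finset.sum_congr rfl fun i _ => (Complex.re_sum _ _).symm
    have hgsum2 : ∑ i, ∑ j, ((starRingEnd ℂ) (x j) * W j i * x i).re = m := by
      rw [Finset.sum_comm]; exact hgsum
    have hLHS : ∑ i, ∑ j, (star (v i j) ⬝ᵥ W *ᵥ v i j).re = 2*(d:ℝ)*D - 2*m := by
      have e1 : ∀ i j : Fin d, (star (v i j) ⬝ᵥ W *ᵥ v i j).re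
          = ((‖x i‖^2 * (W i i).re + ‖x j‖^2 * (W j j).re)
            - (((starRingEnd ℂ) (x i) * W i j * x j).re
              + ((starRingEnd ℂ) (x j) * W j i * x i).re)) := by
        intro i j
        have := quad_vij W x i j
        rw [this, Complex.sub_re, Complex.add_re, Complex.add_re, hgdiag i, hgdiag j]
      rw [Finset.sum_congr rfl (fun i _ => Finset.sum_congr rfl (fun j _ => e1 i j))]
      simp only [Finset.sum_sub_distrib, Finset.sum_add_distrib, Finset.sum_const,
        Finset.card_univ, Fintype.card_fin, nsmul_eq_mul, hgsum, hgsum2, ← Finset.mul_sum]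
      rw [← hDdef]
      ring
    have hRHS : ∑ i, ∑ j, M * ∑ l, ‖v i j l‖^2 = M * (2*(d:ℝ) - 2) := by
      have e2 : ∀ i j : Fin d, M * ∑ l, ‖v i j l‖^2
          = M * (if i = j then (0:ℝ) else ‖x i‖^2 + ‖x j‖^2) := by
        intro i j
        rw [normsq_vij x i j]
      rw [Finset.sum_congr rfl (fun i _ => Finset.sum_congr rfl (fun j _ => e2 i j))]
      have e3 : ∀ i j : Fin d, M * (if i = j then (0:ℝ) else ‖x i‖^2 + ‖x j‖^2)
          = M * (‖x i‖^2 + ‖x j‖^2) - (if i = j then M * (‖x i‖^2 + ‖x j‖^2) else 0) := by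
        intro i j; split <;> ring
      rw [Finset.sum_congr rfl (fun i _ => Finset.sum_congr rfl (fun j _ => e3 i j))]
      simp only [Finset.sum_sub_distrib, Finset.sum_add_distrib, mul_add,
        Finset.sum_const, Finset.card_univ, Fintype.card_fin, nsmul_eq_mul,
        Finset.sum_ite_eq, Finset.mem_univ, if_true, ← Finset.mul_sum, hxsum]
      ring
    rw [hLHS, hRHS] at hsum
    nlinarith [hsum]
  -- first inequality via subsets
  set C1 := (d-1).choose (k-1) with hC1def
  set C2 := (if k = 1 then 0 else (d-2).choose (k-2)) with hC2def
  have hcount1 : ∀ i : Fin d,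
      ((Finset.powersetCard k (Finset.univ : Finset (Fin d))).filter
        (fun S => i ∈ S ∧ i ∈ S)).card = C1 := by
    intro i
    have e : (Finset.powersetCard k (Finset.univ : Finset (Fin d))).filter
        (fun S => i ∈ S ∧ i ∈ S)
        = (Finset.powersetCard k (Finset.univ : Finset (Fin d))).filter (fun S => i ∈ S) :=
      Finset.filter_congr (fun S _ => by simp)
    rw [e, count_single hk i, hC1def]
  have hcount2 : ∀ i j : Fin d, i ≠ j →
      ((Finset.powersetCard k (Finset.univ : Finset (Fin d))).filter
        (fun S => i ∈ S ∧ j ∈ S)).card = C2 := by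
    intro i j hij
    by_cases h1 : k = 1
    · subst h1; rw [count_pair_one i j hij, hC2def]; simp
    · rw [count_pair (by omega) i j hij, hC2def, if_neg h1]
  have hquad_sum : (∑ S ∈ Finset.powersetCard k (Finset.univ : Finset (Fin d)),
      star (fun i => if i ∈ S then x i else 0) ⬝ᵥ W *ᵥ (fun i => if i ∈ S then x i else 0))
      = (C2:ℂ) * (star x ⬝ᵥ W *ᵥ x)
        + ((C1:ℂ) - (C2:ℂ)) * (∑ i, (starRingEnd ℂ) (x i) * W i i * x i) := by
    rw [Finset.sum_congr rfl (fun S _ => quad_restrict W x S), sum_over_subsets]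
    have e : ∀ i j : Fin d,
        ((((Finset.powersetCard k (Finset.univ : Finset (Fin d))).filter
          (fun S => i ∈ S ∧ j ∈ S)).card : ℂ)) = (if i = j then (C1:ℂ) else (C2:ℂ)) := by
      intro i j
      by_cases hij : i = j
      · subst hij; rw [hcount1 i, if_pos rfl]
      · rw [hcount2 i j hij, if_neg hij]
    rw [Finset.sum_congr rfl (fun i _ => Finset.sum_congr rfl (fun j _ => by rw [e i j]))]
    rw [split_diag, ← quad_expand]
  have h1 : 0 ≤ (C2:ℝ) * m + ((C1:ℝ) - (C2:ℝ)) * D := by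
    have hnn : 0 ≤ (∑ S ∈ Finset.powersetCard k (Finset.univ : Finset (Fin d)),
        star (fun i => if i ∈ S then x i else 0) ⬝ᵥ W *ᵥ
          (fun i => if i ∈ S then x i else 0)).re := by
      rw [Complex.re_sum]
      apply Finset.sum_nonneg
      intro S hS
      apply hwit'
      have hsub : (Finset.univ.filter (fun i => (if i ∈ S then x i else 0) ≠ 0)) ⊆ S := by
        intro i hi
        by_contra hiS
        have h3 := (Finset.mem_filter.1 hi).2
        simp only [hiS, if_false] at h3
        exact h3 rfl
      have hck : cohRank (fun i => if i ∈ S then x i else 0)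
          = (Finset.univ.filter (fun i => (if i ∈ S then x i else 0) ≠ 0)).card := rfl
      rw [hck]
      calc (Finset.univ.filter (fun i => (if i ∈ S then x i else 0) ≠ 0)).card
          ≤ S.card := Finset.card_le_card hsub
        _ = k := Finset.mem_powersetCard_univ.1 hS
    rw [hquad_sum, hqx] at hnn
    have e : ((C2:ℂ) * ((m:ℝ):ℂ)
        + ((C1:ℂ) - (C2:ℂ)) * (∑ i, (starRingEnd ℂ) (x i) * W i i * x i)).re
        = (C2:ℝ) * m + ((C1:ℝ) - (C2:ℝ)) * D := by
      rw [Complex.add_re, Complex.mul_re, Complex.mul_re, Complex.sub_re, Complex.sub_im]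
      simp only [Complex.natCast_re, Complex.natCast_im, Complex.ofReal_re, Complex.ofReal_im,
        hDre]
      ring
    rw [e] at hnn
    exact hnn
  -- numeric identities
  have hC1pos : 0 < C1 := by rw [hC1def]; exact Nat.choose_pos (by omega)
  have hC2leC1 : C2 ≤ C1 := by
    by_cases h1 : k = 1
    · rw [hC2def, if_pos h1]; exact Nat.zero_le _
    · have h2k : 2 ≤ k := by omega
      have h2d : 2 ≤ d := le_trans h2k hkd
      rw [hC2def, if_neg h1, hC1def]
      have e1 : d - 1 = (d-2)+1 := by omega
      have e2 : k - 1 = (k-2)+1 := by omega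
      rw [e1, e2, Nat.choose_succ_succ]
      omega
  have hId : ((d:ℝ)-1) * (C2:ℝ) = ((k:ℝ)-1) * (C1:ℝ) := by
    by_cases h1 : k = 1
    · rw [hC2def, if_pos h1, h1]; simp
    · have h2k : 2 ≤ k := by omega
      have h2d : 2 ≤ d := le_trans h2k hkd
      have hnat : (d-1) * C2 = C1 * (k-1) := by
        rw [hC2def, if_neg h1, hC1def]
        have e1 : d - 1 = Nat.succ (d-2) := by omega
        have e2 : k - 1 = Nat.succ (k-2) := by omega
        rw [e1, e2]; exact Nat.add_one_mul_choose_eq _ _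
      have hcast := congrArg (fun t : ℕ => (t:ℝ)) hnat
      push_cast at hcast
      rw [Nat.cast_sub (by omega : 1 ≤ d), Nat.cast_sub (by omega : 1 ≤ k)] at hcast
      push_cast at hcast
      linarith
  have hkR : (1:ℝ) ≤ (k:ℝ) := by exact_mod_cast hk
  have hkdR : (k:ℝ) ≤ (d:ℝ) := by exact_mod_cast hkd
  have key : 0 ≤ (k:ℝ) * m + ((d:ℝ) - (k:ℝ)) * M := by
    have hsubnn : (0:ℝ) ≤ (C1:ℝ) - (C2:ℝ) := by
      have : (C2:ℝ) ≤ (C1:ℝ) := by exact_mod_cast hC2leC1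
      linarith
    have p1 : ((C1:ℝ) - (C2:ℝ)) * ((d:ℝ) * D)
        ≤ ((C1:ℝ) - (C2:ℝ)) * (((d:ℝ)-1) * M + m) :=
      mul_le_mul_of_nonneg_left (by linarith) hsubnn
    have p2 : 0 ≤ (d:ℝ) * ((C2:ℝ) * m + ((C1:ℝ) - (C2:ℝ)) * D) :=
      mul_nonneg (by linarith) h1
    have step1 : 0 ≤ ((C1:ℝ) + ((d:ℝ)-1) * (C2:ℝ)) * m
        + ((C1:ℝ) - (C2:ℝ)) * (((d:ℝ)-1) * M) := by nlinarith [p1, p2]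
    have step3 : (k:ℝ) * (((C1:ℝ) - (C2:ℝ)) * ((d:ℝ)-1))
        = ((d:ℝ) - (k:ℝ)) * ((C1:ℝ) + ((d:ℝ)-1) * (C2:ℝ)) := by
      linear_combination (-(d:ℝ)) * hId
    have hknn : (0:ℝ) ≤ (k:ℝ) := by linarith
    have e4 : ((C1:ℝ) + ((d:ℝ)-1) * (C2:ℝ)) * ((k:ℝ) * m + ((d:ℝ) - (k:ℝ)) * M)
        = (k:ℝ) * (((C1:ℝ) + ((d:ℝ)-1) * (C2:ℝ)) * m
          + ((C1:ℝ) - (C2:ℝ)) * (((d:ℝ)-1) * M)) := by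
      linear_combination (-M) * step3
    have step4 : 0 ≤ ((C1:ℝ) + ((d:ℝ)-1) * (C2:ℝ))
        * ((k:ℝ) * m + ((d:ℝ) - (k:ℝ)) * M) := by
      rw [e4]
      exact mul_nonneg hknn step1
    have hTpos : 0 < (C1:ℝ) + ((d:ℝ)-1) * (C2:ℝ) := by
      have hc1 : (0:ℝ) < (C1:ℝ) := by exact_mod_cast hC1pos
      have hc2 : (0:ℝ) ≤ ((d:ℝ)-1) * (C2:ℝ) :=
        mul_nonneg (by linarith) (by positivity)
      linarith
    by_contra hneg
    push_neg at hneg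
    have hx2 : 0 < ((C1:ℝ) + ((d:ℝ)-1) * (C2:ℝ))
        * (-((k:ℝ) * m + ((d:ℝ) - (k:ℝ)) * M)) :=
      mul_pos hTpos (by linarith)
    linarith [step4, hx2]
  -- conclude
  rw [ge_iff_le, hinf]
  have hk0 : (0:ℝ) < (k:ℝ) := by linarith
  have e : -(((d:ℝ) - (k:ℝ)) / (k:ℝ)) * M = -((((d:ℝ)-(k:ℝ)) * M) / (k:ℝ)) := by ring
  rw [e, neg_le, le_div_iff₀ hk0]
  linarith [key]
end
end

section
/- The operator W_k(ψ) = I − (Σ_{i=1}^k |c_i↓|²)^{-1} |ψ⟩⟨ψ| is a (k+1)-level coherence witness: ⟨φ|W_k(ψ)|φ⟩ ≥ 0 for every pure state φ with coherence rank at most k; and ⟨ψ|W_k(ψ)|ψ⟩ < 0 whenever ψ has coherence rank greater than k. -/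
open Matrix BigOperators ComplexOrder

noncomputable section

/-- projector onto the pure state with coefficient vector `v` -/
def pureProj {d : ℕ} (v : Fin d → ℂ) : Matrix (Fin d) (Fin d) ℂ :=
  Matrix.vecMulVec v (star v)

/-- the squared moduli of the coefficients of `c`, sorted in non-increasing order -/
def sortedAbsSq {d : ℕ} (c : Fin d → ℂ) : Fin d → ℝ :=
  fun i => ‖c (Tuple.sort (fun j => -‖c j‖ ^ 2) i)‖ ^ 2

/-- sum of the `k` largest squared moduli of the coefficients of `c` -/
def topk {d : ℕ} (c : Fin d → ℂ) (k : ℕ) : ℝ :=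
  ∑ i ∈ Finset.univ.filter (fun i : Fin d => (i : ℕ) < k), sortedAbsSq c i

lemma card_filter_lt_fin {d k : ℕ} (hkd : k ≤ d) :
    (Finset.univ.filter (fun i : Fin d => (i : ℕ) < k)).card = k := by
  have h : ∀ m ∈ Finset.range k, m < d := fun m hm =>
    lt_of_lt_of_le (Finset.mem_range.mp hm) hkd
  have : Finset.univ.filter (fun i : Fin d => (i : ℕ) < k)
      = (Finset.range k).attachFin h := by
    ext i
    simp [Finset.mem_attachFin]
  rw [this, Finset.card_attachFin, Finset.card_range]

/-- sum over a set of cardinality at most `k` of an antitone nonnegative function is at most the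
sum over the first `k` indices -/
lemma sum_le_sum_first {d k : ℕ} (hkd : k ≤ d) (h : Fin d → ℝ)
    (hmono : ∀ i j : Fin d, i ≤ j → h j ≤ h i) (hnn : ∀ i, 0 ≤ h i)
    (A : Finset (Fin d)) (hA : A.card ≤ k) :
    ∑ i ∈ A, h i ≤ ∑ i ∈ Finset.univ.filter (fun i : Fin d => (i : ℕ) < k), h i := by
  set B := Finset.univ.filter (fun i : Fin d => (i : ℕ) < k) with hB
  have hBcard : B.card = k := card_filter_lt_fin hkd
  have hsplitA : ∑ i ∈ A, h i = ∑ i ∈ A ∩ B, h i + ∑ i ∈ A \ B, h i := by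
    rw [Finset.sum_inter_add_sum_sdiff]
  have hsplitB : ∑ i ∈ B, h i = ∑ i ∈ B ∩ A, h i + ∑ i ∈ B \ A, h i := by
    rw [Finset.sum_inter_add_sum_sdiff]
  have hcard : (A \ B).card ≤ (B \ A).card := by
    have h1 := Finset.card_inter_add_card_sdiff A B
    have h2 := Finset.card_inter_add_card_sdiff B A
    have : (A ∩ B).card = (B ∩ A).card := by rw [Finset.inter_comm]
    omega
  have hinter : ∑ i ∈ A ∩ B, h i = ∑ i ∈ B ∩ A, h i := by rw [Finset.inter_comm]
  have hkey : ∑ i ∈ A \ B, h i ≤ ∑ i ∈ B \ A, h i := by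
    rcases Finset.eq_empty_or_nonempty (B \ A) with hBA | hBA
    · have hAe : A \ B = ∅ := by
        rw [hBA] at hcard
        simp only [Finset.card_empty, Nat.le_zero, Finset.card_eq_zero] at hcard
        exact hcard
      rw [hAe, hBA]
    · set b := (B \ A).max' hBA with hb
      have hbmem : b ∈ B \ A := (B \ A).max'_mem hBA
      have hbB : b ∈ B := (Finset.mem_sdiff.mp hbmem).1
      have hbk : (b : ℕ) < k := by
        have := Finset.mem_filter.mp hbB; exact this.2
      have h1 : ∑ i ∈ A \ B, h i ≤ (A \ B).card • h b := by
        apply Finset.sum_le_card_nsmul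
        intro x hx
        have hxB : x ∉ B := (Finset.mem_sdiff.mp hx).2
        have hxk : ¬ ((x : ℕ) < k) := by
          intro hc; exact hxB (Finset.mem_filter.mpr ⟨Finset.mem_univ _, hc⟩)
        apply hmono
        have : (b : ℕ) ≤ (x : ℕ) := le_trans (le_of_lt hbk) (not_lt.mp hxk)
        exact this
      have h2 : (B \ A).card • h b ≤ ∑ i ∈ B \ A, h i := by
        apply Finset.card_nsmul_le_sum
        intro x hx
        apply hmono
        exact (B \ A).le_max' x hx
      calc ∑ i ∈ A \ B, h i ≤ (A \ B).card • h b := h1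
        _ ≤ (B \ A).card • h b := by
            rcases le_or_gt 0 (h b) with hpos | hneg
            · exact nsmul_le_nsmul_left hpos hcard
            · exact absurd (hnn b) (not_le.mpr hneg)
        _ ≤ ∑ i ∈ B \ A, h i := h2
  rw [hsplitA, hsplitB, hinter]
  exact add_le_add le_rfl hkey

/-- any subset sum of squared moduli with at most `k` elements is bounded by `topk` -/
lemma sum_sq_le_topk {d k : ℕ} (hkd : k ≤ d) (ψ : Fin d → ℂ)
    (S : Finset (Fin d)) (hS : S.card ≤ k) :
    ∑ i ∈ S, ‖ψ i‖ ^ 2 ≤ topk ψ k := by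
  set σ := Tuple.sort (fun j => -‖ψ j‖ ^ 2) with hσ
  set h : Fin d → ℝ := fun i => ‖ψ (σ i)‖ ^ 2 with hh
  have hmono : ∀ i j : Fin d, i ≤ j → h j ≤ h i := by
    intro i j hij
    have := Tuple.monotone_sort (fun j => -‖ψ j‖ ^ 2) hij
    simp only [Function.comp_apply] at this
    simpa [hh] using neg_le_neg_iff.mp this
  have hnn : ∀ i, 0 ≤ h i := fun i => sq_nonneg _
  set A := S.image σ.symm with hA
  have hAcard : A.card ≤ k := by
    rw [hA, Finset.card_image_of_injective _ σ.symm.injective]; exact hS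
  have hsum : ∑ i ∈ A, h i = ∑ i ∈ S, ‖ψ i‖ ^ 2 := by
    rw [hA, Finset.sum_image (fun x _ y _ hxy => σ.symm.injective hxy)]
    apply Finset.sum_congr rfl
    intro x _
    simp [hh]
  have := sum_le_sum_first hkd h hmono hnn A hAcard
  rw [hsum] at this
  exact this

lemma topk_pos {d k : ℕ} (hk : 1 ≤ k) (hkd : k ≤ d) (ψ : Fin d → ℂ)
    (hrank : 1 ≤ cohRank ψ) : 0 < topk ψ k := by
  have hne : (Finset.univ.filter (fun i => ψ i ≠ 0)).Nonempty := by
    rw [← Finset.card_pos]; exact hrank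
  obtain ⟨i0, hi0⟩ := hne
  have hi0' : ψ i0 ≠ 0 := (Finset.mem_filter.mp hi0).2
  have h1 : ∑ i ∈ {i0}, ‖ψ i‖ ^ 2 ≤ topk ψ k := by
    apply sum_sq_le_topk hkd
    simpa using hk
  have h2 : (0:ℝ) < ‖ψ i0‖ ^ 2 := pow_pos (norm_pos_iff.mpr hi0') 2
  calc (0:ℝ) < ‖ψ i0‖ ^ 2 := h2
    _ = ∑ i ∈ {i0}, ‖ψ i‖ ^ 2 := by simp
    _ ≤ topk ψ k := h1

lemma topk_lt_one {d k : ℕ} (hkd : k ≤ d) (ψ : Fin d → ℂ)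
    (hψ : ∑ i, ‖ψ i‖ ^ 2 = 1) (hrank : k < cohRank ψ) : topk ψ k < 1 := by
  set σ := Tuple.sort (fun j => -‖ψ j‖ ^ 2) with hσ
  set h : Fin d → ℝ := fun i => ‖ψ (σ i)‖ ^ 2 with hh
  set B := Finset.univ.filter (fun i : Fin d => (i : ℕ) < k) with hB
  have hcard : (Finset.univ.filter (fun i => ψ (σ i) ≠ 0)).card = cohRank ψ := by
    unfold cohRank
    apply Finset.card_bij (fun i _ => σ i)
    · intro a ha
      simp only [Finset.mem_filter, Finset.mem_univ, true_and] at ha ⊢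
      exact ha
    · intro a _ b _ hab
      exact σ.injective hab
    · intro b hb
      refine ⟨σ.symm b, ?_, by simp⟩
      simp only [Finset.mem_filter, Finset.mem_univ, true_and] at hb ⊢
      simpa using hb
  -- there is a nonzero coefficient with sorted index ≥ k
  have hex : ∃ i : Fin d, k ≤ (i : ℕ) ∧ ψ (σ i) ≠ 0 := by
    by_contra hcon
    push_neg at hcon
    have hsub : (Finset.univ.filter (fun i => ψ (σ i) ≠ 0)) ⊆ B := by
      intro i hi
      simp only [Finset.mem_filter, Finset.mem_univ, true_and] at hi
      simp only [hB, Finset.mem_filter, Finset.mem_univ, true_and]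
      by_contra hik
      exact hi (hcon i (not_lt.mp hik))
    have := Finset.card_le_card hsub
    rw [hcard, card_filter_lt_fin hkd] at this
    omega
  obtain ⟨i0, hi0k, hi0⟩ := hex
  have htotal : ∑ i, h i = 1 := by
    rw [hh]
    calc ∑ i, ‖ψ (σ i)‖ ^ 2 = ∑ i, ‖ψ i‖ ^ 2 := Equiv.sum_comp σ (fun i => ‖ψ i‖ ^ 2)
      _ = 1 := hψ
  have hsplit : ∑ i, h i = ∑ i ∈ B, h i + ∑ i ∈ Bᶜ, h i := (Finset.sum_add_sum_compl B h).symm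
  have hi0B : i0 ∈ Bᶜ := by
    simp only [hB, Finset.mem_compl, Finset.mem_filter, Finset.mem_univ, true_and]
    omega
  have hrest : 0 < ∑ i ∈ Bᶜ, h i := by
    have h1 : h i0 ≤ ∑ i ∈ Bᶜ, h i :=
      Finset.single_le_sum (f := h) (fun i _ => sq_nonneg _) hi0B
    have h2 : (0:ℝ) < h i0 := pow_pos (norm_pos_iff.mpr hi0) 2
    linarith
  have htopk : topk ψ k = ∑ i ∈ B, h i := rfl
  rw [htopk]
  have := htotal
  rw [hsplit] at this
  linarith

/-- the quadratic form of the witness -/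
lemma quad_form {d : ℕ} (ψ φ : Fin d → ℂ) (T : ℝ) :
    dotProduct (star φ) ((1 - ((T : ℂ))⁻¹ • pureProj ψ).mulVec φ)
      = (((∑ i, ‖φ i‖ ^ 2) - T⁻¹ * ‖dotProduct (star ψ) φ‖ ^ 2 : ℝ) : ℂ) := by
  set s := dotProduct (star ψ) φ with hs
  rw [Matrix.sub_mulVec, dotProduct_sub, Matrix.one_mulVec,
    Matrix.smul_mulVec, dotProduct_smul]
  have hz : ∀ z : ℂ, star z * z = ((‖z‖ ^ 2 : ℝ) : ℂ) := fun z => by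
    rw [RCLike.star_def, mul_comm, Complex.mul_conj']; norm_cast
  have h1 : dotProduct (star φ) φ = ((∑ i, ‖φ i‖ ^ 2 : ℝ) : ℂ) := by
    unfold dotProduct
    rw [Complex.ofReal_sum]
    exact Finset.sum_congr rfl fun i _ => hz (φ i)
  have h2 : (pureProj ψ).mulVec φ = fun i => ψ i * s := by
    funext i
    unfold pureProj Matrix.mulVec Matrix.vecMulVec dotProduct
    simp only [Matrix.of_apply, Pi.star_apply, RCLike.star_def]
    rw [hs]
    unfold dotProduct
    rw [Finset.mul_sum]
    apply Finset.sum_congr rfl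
    intro j _
    simp only [Pi.star_apply, RCLike.star_def]
    ring
  have h3 : dotProduct (star φ) ((pureProj ψ).mulVec φ) = ((‖s‖ ^ 2 : ℝ) : ℂ) := by
    rw [h2]
    unfold dotProduct
    have : ∑ i, star φ i * (ψ i * s) = (∑ i, star φ i * ψ i) * s := by
      rw [Finset.sum_mul]; apply Finset.sum_congr rfl; intro i _; ring
    rw [this]
    have hconj : ∑ i, star φ i * ψ i = (starRingEnd ℂ) s := by
      rw [hs]
      unfold dotProduct
      rw [map_sum]
      apply Finset.sum_congr rfl
      intro i _
      simp only [Pi.star_apply, RCLike.star_def]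
      rw [RingHom.map_mul, Complex.conj_conj]
      ring
    rw [hconj, mul_comm, Complex.mul_conj']
    norm_cast
  rw [h1, h3, smul_eq_mul]
  push_cast
  ring

/-- `W_k(ψ) = I - (Σ_{i≤k}|c_i↓|²)⁻¹ |ψ⟩⟨ψ|` is a `(k+1)`-level coherence witness,
which detects the multilevel coherence of `ψ` when `ψ` has coherence rank `> k`. -/
theorem stmt_16 {d k : ℕ} (hk : 1 ≤ k) (hkd : k ≤ d)
    (ψ : Fin d → ℂ) (hψ : ∑ i, ‖ψ i‖ ^ 2 = 1) (hrank : k ≤ cohRank ψ)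
    (W : Matrix (Fin d) (Fin d) ℂ)
    (hWdef : W = 1 - (((topk ψ k : ℂ))⁻¹) • pureProj ψ) :
    (∀ φ : Fin d → ℂ, (∑ i, ‖φ i‖ ^ 2 = 1) → cohRank φ ≤ k →
        0 ≤ dotProduct (star φ) (W.mulVec φ)) ∧
    (k < cohRank ψ → dotProduct (star ψ) (W.mulVec ψ) < 0) := by
  set T := topk ψ k with hT
  have hTpos : 0 < T := topk_pos hk hkd ψ (le_trans hk hrank)
  subst hWdef
  constructor
  · intro φ hφ hφrank
    rw [quad_form]
    rw [hφ]
    -- Cauchy–Schwarz bound on |⟨ψ,φ⟩|²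
    set s := dotProduct (star ψ) φ with hs
    set S := Finset.univ.filter (fun i => φ i ≠ 0) with hS
    have hcs : ‖s‖ ^ 2 ≤ T := by
      have hssum : s = ∑ i ∈ S, star ψ i * φ i := by
        rw [hs]
        unfold dotProduct
        rw [← Finset.sum_subset (Finset.subset_univ S)]
        intro x _ hx
        simp only [hS, Finset.mem_filter, Finset.mem_univ, true_and, not_not] at hx
        rw [hx, mul_zero]
      have h1 : ‖s‖ ≤ ∑ i ∈ S, ‖ψ i‖ * ‖φ i‖ := by
        rw [hssum]
        refine le_trans (norm_sum_le _ _) ?_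
        apply Finset.sum_le_sum
        intro i _
        rw [norm_mul]
        simp
      have h2 : (∑ i ∈ S, ‖ψ i‖ * ‖φ i‖) ^ 2
          ≤ (∑ i ∈ S, ‖ψ i‖ ^ 2) * ∑ i ∈ S, ‖φ i‖ ^ 2 :=
        Finset.sum_mul_sq_le_sq_mul_sq S _ _
      have h3 : ∑ i ∈ S, ‖ψ i‖ ^ 2 ≤ T := sum_sq_le_topk hkd ψ S hφrank
      have h4 : ∑ i ∈ S, ‖φ i‖ ^ 2 ≤ 1 := by
        rw [← hφ]
        apply Finset.sum_le_sum_of_subset_of_nonneg (Finset.subset_univ S)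
        intro i _ _
        positivity
      have h5 : ‖s‖ ^ 2 ≤ (∑ i ∈ S, ‖ψ i‖ * ‖φ i‖) ^ 2 := by
        apply pow_le_pow_left₀ (norm_nonneg _) h1
      have h6 : (∑ i ∈ S, ‖ψ i‖ ^ 2) * ∑ i ∈ S, ‖φ i‖ ^ 2 ≤ T * 1 := by
        apply mul_le_mul h3 h4 (Finset.sum_nonneg fun i _ => sq_nonneg _)
          (le_of_lt hTpos)
      nlinarith
    rw [← Complex.ofReal_zero, Complex.real_le_real]
    have : T⁻¹ * ‖s‖ ^ 2 ≤ T⁻¹ * T := by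
      apply mul_le_mul_of_nonneg_left hcs (le_of_lt (inv_pos.mpr hTpos))
    rw [inv_mul_cancel₀ (ne_of_gt hTpos)] at this
    linarith
  · intro hlt
    rw [quad_form, hψ]
    have hself : dotProduct (star ψ) ψ = ((1:ℝ):ℂ) := by
      have h0 : dotProduct (star ψ) ψ = ((∑ i, ‖ψ i‖ ^ 2 : ℝ) : ℂ) := by
        unfold dotProduct
        rw [Complex.ofReal_sum]
        refine Finset.sum_congr rfl fun i _ => ?_
        rw [Pi.star_apply, RCLike.star_def, mul_comm, Complex.mul_conj']
        norm_cast
      rw [h0, hψ]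
    rw [hself, Complex.ofReal_one, norm_one]
    have hT1 : T < 1 := topk_lt_one hkd ψ hψ hlt
    have hTi : (1:ℝ) < T⁻¹ := (one_lt_inv_iff₀).mpr ⟨hTpos, hT1⟩
    rw [← Complex.ofReal_zero, Complex.real_lt_real]
    nlinarith
end
end
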